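/- Let d ≥ 1, let x, y ∈ {0,1}^d, let w = 4d + 1, and let t ∈ ℝ with |t| ≥ w. Then CD(A(x) + t, B(y)) = |t|·2(d+1) − 4d² − 5d − 1, where A(x), B(y) ⊂ ℝ are the vector-gadget point sets; in particular this value does not depend on x or y. -/

import Mathlib

open Finset
open scoped Classical

/-- Chamfer distance from finset `A` to finset `B` in `ℝ`:
`CD(A,B) = Σ_{a∈A} min_{b∈B} |a−b|`. -/
noncomputable def CD (A B : Finset ℝ) : ℝ :=
  ∑ a ∈ A, Metric.infDist a (B : Set ℝ)

/-- The translate `A + t = {a + t : a ∈ A}`. -/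
noncomputable def shiftSet (A : Finset ℝ) (t : ℝ) : Finset ℝ :=
  A.image (· + t)

/-- Chamfer distance under translation: `CDuT(A,B) = inf_{t∈ℝ} CD(A+t,B)`. -/
noncomputable def CDuT (A B : Finset ℝ) : ℝ :=
  ⨅ t : ℝ, CD (shiftSet A t) B

/-- The vector gadget `A(x) ⊂ ℝ` for `x ∈ {0,1}^d`: the points `0` and `4d+1`,
together with, for each coordinate `k = i+1 ∈ {1,…,d}`, the points
`{4k−2, 4k−1}` if `x_k = 0` and `{4k−3, 4k}` if `x_k = 1`. -/
noncomputable def gadgetA (d : ℕ) (x : Fin d → Bool) : Finset ℝ :=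
  ({0, 4 * (d : ℝ) + 1} : Finset ℝ) ∪
    Finset.univ.biUnion (fun i : Fin d =>
      if x i then ({4 * (i : ℝ) + 1, 4 * (i : ℝ) + 4} : Finset ℝ)
      else ({4 * (i : ℝ) + 2, 4 * (i : ℝ) + 3} : Finset ℝ))

/-- The vector gadget `B(y) ⊂ ℝ` for `y ∈ {0,1}^d`: the points `0` and `4d+1`,
together with, for each coordinate `k = i+1 ∈ {1,…,d}`, the points
`{4k−3, 4k−2, 4k−1, 4k}` if `y_k = 0` and `{4k−2, 4k−1}` if `y_k = 1`. -/
noncomputable def gadgetB (d : ℕ) (y : Fin d → Bool) : Finset ℝ :=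
  ({0, 4 * (d : ℝ) + 1} : Finset ℝ) ∪
    Finset.univ.biUnion (fun i : Fin d =>
      if y i then ({4 * (i : ℝ) + 2, 4 * (i : ℝ) + 3} : Finset ℝ)
      else ({4 * (i : ℝ) + 1, 4 * (i : ℝ) + 2, 4 * (i : ℝ) + 3, 4 * (i : ℝ) + 4} : Finset ℝ))

lemma gadgetB_bounds {d : ℕ} {y : Fin d → Bool} {b : ℝ} (hb : b ∈ gadgetB d y) :
    0 ≤ b ∧ b ≤ 4 * (d : ℝ) + 1 := by
  simp only [gadgetB, Finset.mem_union, Finset.mem_insert, Finset.mem_singleton,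
    Finset.mem_biUnion, Finset.mem_univ, true_and] at hb
  have hd0 : (0:ℝ) ≤ (d : ℝ) := Nat.cast_nonneg d
  have hd : ∀ i : Fin d, (i : ℝ) + 1 ≤ (d : ℝ) := by
    intro i
    exact_mod_cast Nat.cast_le.2 (Nat.succ_le_of_lt i.isLt)
  rcases hb with (rfl | rfl) | ⟨i, hi⟩
  · constructor <;> linarith
  · constructor <;> linarith
  · have := hd i
    have hi0 : (0:ℝ) ≤ (i : ℝ) := Nat.cast_nonneg _
    split_ifs at hi <;> simp only [Finset.mem_insert, Finset.mem_singleton] at hi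
    · rcases hi with rfl | rfl <;> constructor <;> linarith
    · rcases hi with rfl | rfl | rfl | rfl <;> constructor <;> linarith

lemma gadgetA_bounds {d : ℕ} {x : Fin d → Bool} {a : ℝ} (ha : a ∈ gadgetA d x) :
    0 ≤ a ∧ a ≤ 4 * (d : ℝ) + 1 := by
  simp only [gadgetA, Finset.mem_union, Finset.mem_insert, Finset.mem_singleton,
    Finset.mem_biUnion, Finset.mem_univ, true_and] at ha
  have hd0 : (0:ℝ) ≤ (d : ℝ) := Nat.cast_nonneg d
  have hd : ∀ i : Fin d, (i : ℝ) + 1 ≤ (d : ℝ) := by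
    intro i
    exact_mod_cast Nat.cast_le.2 (Nat.succ_le_of_lt i.isLt)
  rcases ha with (rfl | rfl) | ⟨i, hi⟩
  · constructor <;> linarith
  · constructor <;> linarith
  · have := hd i
    have hi0 : (0:ℝ) ≤ (i : ℝ) := Nat.cast_nonneg _
    split_ifs at hi <;> simp only [Finset.mem_insert, Finset.mem_singleton] at hi <;>
      rcases hi with rfl | rfl <;> constructor <;> linarith

lemma zero_mem_gadgetB (d : ℕ) (y : Fin d → Bool) : (0:ℝ) ∈ gadgetB d y := by
  simp [gadgetB]

lemma w_mem_gadgetB (d : ℕ) (y : Fin d → Bool) : (4 * (d:ℝ) + 1) ∈ gadgetB d y := by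
  simp [gadgetB]

lemma le_infDist' {s : Set ℝ} (hs : s.Nonempty) {p c : ℝ}
    (h : ∀ b ∈ s, c ≤ dist p b) : c ≤ Metric.infDist p s := by
  rw [Metric.infDist_eq_iInf]
  haveI := hs.to_subtype
  exact le_ciInf fun b => h b b.2

/-- infDist to B of a point to the right of all of B. -/
lemma infDist_right {d : ℕ} {y : Fin d → Bool} {p : ℝ} (hp : 4 * (d:ℝ) + 1 ≤ p) :
    Metric.infDist p ((gadgetB d y : Finset ℝ) : Set ℝ) = p - (4 * (d:ℝ) + 1) := by
  have hne : ((gadgetB d y : Finset ℝ) : Set ℝ).Nonempty :=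
    ⟨0, by exact_mod_cast zero_mem_gadgetB d y⟩
  apply le_antisymm
  · have := Metric.infDist_le_dist_of_mem
      (x := p) (y := 4 * (d:ℝ) + 1) (s := ((gadgetB d y : Finset ℝ) : Set ℝ))
      (by exact_mod_cast w_mem_gadgetB d y)
    rwa [Real.dist_eq, abs_of_nonneg (by linarith)] at this
  · apply le_infDist' hne
    intro b hb
    have hb' : b ∈ gadgetB d y := by exact_mod_cast hb
    obtain ⟨h0, h1⟩ := gadgetB_bounds hb'
    rw [Real.dist_eq, abs_of_nonneg (by linarith)]
    linarith

/-- infDist to B of a point to the left of all of B. -/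
lemma infDist_left {d : ℕ} {y : Fin d → Bool} {p : ℝ} (hp : p ≤ 0) :
    Metric.infDist p ((gadgetB d y : Finset ℝ) : Set ℝ) = -p := by
  have hne : ((gadgetB d y : Finset ℝ) : Set ℝ).Nonempty :=
    ⟨0, by exact_mod_cast zero_mem_gadgetB d y⟩
  apply le_antisymm
  · have := Metric.infDist_le_dist_of_mem
      (x := p) (y := 0) (s := ((gadgetB d y : Finset ℝ) : Set ℝ))
      (by exact_mod_cast zero_mem_gadgetB d y)
    rwa [Real.dist_eq, sub_zero, abs_of_nonpos hp] at this
  · apply le_infDist' hne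
    intro b hb
    have hb' : b ∈ gadgetB d y := by exact_mod_cast hb
    obtain ⟨h0, h1⟩ := gadgetB_bounds hb'
    rw [Real.dist_eq, abs_of_nonpos (by linarith)]
    linarith

lemma gaussR (d : ℕ) : ∑ i ∈ Finset.range d, (i : ℝ) = d * (d - 1) / 2 := by
  induction d with
  | zero => simp
  | succ n ih => rw [Finset.sum_range_succ, ih]; push_cast; ring

/-- key sum over the gadget A. -/
lemma sumA (d : ℕ) (x : Fin d → Bool) (c : ℝ) :
    ∑ a ∈ gadgetA d x, (a + c) =
      (4 * (d:ℝ)^2 + 5 * d + 1) + (2 * d + 2) * c := by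
  have hd : ∀ i : Fin d, (i : ℝ) + 1 ≤ (d : ℝ) := by
    intro i
    exact_mod_cast Nat.cast_le.2 (Nat.succ_le_of_lt i.isLt)
  set S : Fin d → Finset ℝ := fun i =>
    if x i then ({4 * (i : ℝ) + 1, 4 * (i : ℝ) + 4} : Finset ℝ)
    else ({4 * (i : ℝ) + 2, 4 * (i : ℝ) + 3} : Finset ℝ) with hS
  have hbound : ∀ i : Fin d, ∀ a ∈ S i, 4 * (i:ℝ) + 1 ≤ a ∧ a ≤ 4 * (i:ℝ) + 4 := by
    intro i a ha
    rw [hS] at ha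
    dsimp only at ha
    split_ifs at ha <;> simp only [Finset.mem_insert, Finset.mem_singleton] at ha <;>
      rcases ha with rfl | rfl <;> constructor <;> linarith
  have hdisj : Disjoint ({0, 4 * (d : ℝ) + 1} : Finset ℝ) (Finset.univ.biUnion S) := by
    rw [Finset.disjoint_left]
    intro a ha ha'
    simp only [Finset.mem_insert, Finset.mem_singleton] at ha
    simp only [Finset.mem_biUnion, Finset.mem_univ, true_and] at ha'
    obtain ⟨i, hi⟩ := ha'
    obtain ⟨h1, h2⟩ := hbound i a hi
    have := hd i
    have hi0 : (0:ℝ) ≤ (i : ℝ) := Nat.cast_nonneg _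
    rcases ha with rfl | rfl <;> linarith
  have hpair : ((Finset.univ : Finset (Fin d)) : Set (Fin d)).PairwiseDisjoint S := by
    intro i _ j _ hij
    rw [Function.onFun, Finset.disjoint_left]
    intro a hai haj
    obtain ⟨hi1, hi2⟩ := hbound i a hai
    obtain ⟨hj1, hj2⟩ := hbound j a haj
    apply hij
    have h1 : (i:ℕ) < j + 1 := by exact_mod_cast (by push_cast; linarith : ((i:ℕ):ℝ) < (j:ℕ) + 1)
    have h2 : (j:ℕ) < i + 1 := by exact_mod_cast (by push_cast; linarith : ((j:ℕ):ℝ) < (i:ℕ) + 1)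
    exact Fin.ext (by omega)
  have hSsum : ∀ i : Fin d, ∑ a ∈ S i, (a + c) = 8 * (i:ℝ) + 5 + 2 * c := by
    intro i
    rw [hS]
    dsimp only
    split_ifs <;>
      rw [Finset.sum_pair (by intro h; norm_num at h)] <;> ring
  rw [gadgetA, Finset.sum_union hdisj, Finset.sum_biUnion hpair]
  have h01 : (0:ℝ) ≠ 4 * (d : ℝ) + 1 := by
    have : (0:ℝ) ≤ (d:ℝ) := Nat.cast_nonneg d
    intro h; linarith [h]
  rw [Finset.sum_pair h01]
  have : ∑ i : Fin d, ∑ a ∈ S i, (a + c) = ∑ i : Fin d, (8 * (i:ℝ) + 5 + 2 * c) := by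
    exact Finset.sum_congr rfl fun i _ => hSsum i
  rw [this, Fin.sum_univ_eq_sum_range (fun i => 8 * (i:ℝ) + 5 + 2 * c)]
  rw [Finset.sum_add_distrib, Finset.sum_add_distrib, ← Finset.mul_sum, gaussR]
  simp only [Finset.sum_const, Finset.card_range, nsmul_eq_mul]
  ring

/-- For `|t| ≥ w = 4d+1`, the Chamfer distance of the gadgets is
`|t|·2(d+1) − 4d² − 5d − 1`, independently of `x` and `y`. -/
theorem far_translation_gadget_value (d : ℕ) (hd : 1 ≤ d) (x y : Fin d → Bool)
    (t : ℝ) (ht : 4 * (d : ℝ) + 1 ≤ |t|) :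
    CD (shiftSet (gadgetA d x) t) (gadgetB d y) =
      |t| * (2 * ((d : ℝ) + 1)) - (4 * (d : ℝ) ^ 2 + 5 * (d : ℝ) + 1) := by
  have hd0 : (0:ℝ) ≤ (d : ℝ) := Nat.cast_nonneg d
  have hinj : ∀ a ∈ gadgetA d x, ∀ b ∈ gadgetA d x, a + t = b + t → a = b := by
    intro a _ b _ h; linarith
  rw [CD, shiftSet, Finset.sum_image hinj]
  rcases abs_cases t with ⟨habs, hsign⟩ | ⟨habs, hsign⟩
  · -- t ≥ 0, so t ≥ w
    rw [habs] at ht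
    have : ∀ a ∈ gadgetA d x,
        Metric.infDist (a + t) ((gadgetB d y : Finset ℝ) : Set ℝ)
          = (a + t) - (4 * (d:ℝ) + 1) := by
      intro a ha
      obtain ⟨h0, _⟩ := gadgetA_bounds ha
      exact infDist_right (by linarith)
    rw [Finset.sum_congr rfl this]
    have := sumA d x (t - (4 * (d:ℝ) + 1))
    have heq : ∀ a ∈ gadgetA d x, a + t - (4 * (d:ℝ) + 1) = a + (t - (4 * (d:ℝ) + 1)) := by
      intro a _; ring
    rw [Finset.sum_congr rfl heq, this, habs]
    ring
  · -- t < 0, so t ≤ -w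
    rw [habs] at ht
    have : ∀ a ∈ gadgetA d x,
        Metric.infDist (a + t) ((gadgetB d y : Finset ℝ) : Set ℝ) = -(a + t) := by
      intro a ha
      obtain ⟨_, h1⟩ := gadgetA_bounds ha
      exact infDist_left (by linarith)
    rw [Finset.sum_congr rfl this, Finset.sum_neg_distrib, sumA d x t, habs]
    ring
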